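/- Let A be an oriented graph on a type V that is a push clique, and let v be a vertex whose set of neighbors (vertices adjacent to v in A) is exactly {x, y} with x ≠ y. Then every vertex other than v, x, y is adjacent in A to both x and y. -/

import Mathlib

/-- A directed graph `A` on `V` is an oriented graph: irreflexive and asymmetric. -/
def IsOriented {V : Type*} (A : V → V → Prop) : Prop :=
  (∀ v, ¬ A v v) ∧ ∀ u v, A u v → ¬ A v u

/-- `u` and `v` are adjacent in `A`. -/
def Adj {V : Type*} (A : V → V → Prop) (u v : V) : Prop :=
  A u v ∨ A v u

/-- The push of `A` by the vertex set `S`: arcs with exactly one endpoint in `S`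
are reversed. -/
def push {V : Type*} (S : Set V) (A : V → V → Prop) (u v : V) : Prop :=
  (Xor' (u ∈ S) (v ∈ S) ∧ A v u) ∨ (¬ Xor' (u ∈ S) (v ∈ S) ∧ A u v)

/-- `u` and `v` agree on `w`. -/
def AgreeOn {V : Type*} (A : V → V → Prop) (u v w : V) : Prop :=
  (A w u ∧ A w v) ∨ (A u w ∧ A v w)

/-- `u` and `v` disagree on `w`. -/
def DisagreeOn {V : Type*} (A : V → V → Prop) (u v w : V) : Prop :=
  (A u w ∧ A w v) ∨ (A w u ∧ A v w)

/-- `u` and `v` are joined by a directed 2-path in `A`. -/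
def TwoPath {V : Type*} (A : V → V → Prop) (u v : V) : Prop :=
  ∃ w, (A u w ∧ A w v) ∨ (A v w ∧ A w u)

/-- `A` is an oriented clique: any two distinct vertices are adjacent or joined
by a directed 2-path. -/
def IsOrientedClique {V : Type*} (A : V → V → Prop) : Prop :=
  ∀ u v, u ≠ v → Adj A u v ∨ TwoPath A u v

/-- `A` is a push clique: every push of `A` is an oriented clique. -/
def IsPushClique {V : Type*} (A : V → V → Prop) : Prop :=
  ∀ S : Set V, IsOrientedClique (push S A)

/-- `A` is an orientation of the simple graph `G`. -/
def IsOrientationOf {V : Type*} (A : V → V → Prop) (G : SimpleGraph V) : Prop :=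
  IsOriented A ∧ ∀ u v, Adj A u v ↔ G.Adj u v

/-- `G` is an underlying push clique. -/
def IsUnderlyingPushClique {V : Type*} (G : SimpleGraph V) : Prop :=
  ∃ A : V → V → Prop, IsOrientationOf A G ∧ IsPushClique A

/-- `G` is an underlying oriented clique. -/
def IsUnderlyingOrientedClique {V : Type*} (G : SimpleGraph V) : Prop :=
  ∃ A : V → V → Prop, IsOrientationOf A G ∧ IsOrientedClique A

theorem stmt_17 {V : Type*} (A : V → V → Prop) (hA : IsOriented A)
    (h : IsPushClique A) (v x y : V) (hxy : x ≠ y)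
    (hnbr : ∀ u : V, Adj A v u ↔ (u = x ∨ u = y)) :
    ∀ z : V, z ≠ v → z ≠ x → z ≠ y → Adj A z x ∧ Adj A z y := by

  intro z hzv hzx hzy
  obtain ⟨hirr, hasym⟩ := hA
  have adjsym : ∀ u w : V, Adj A u w → Adj A w u := by
    intro u w hh; unfold Adj at *; tauto
  have hnadj : ¬ Adj A z v := by
    intro hadj
    rcases (hnbr z).1 (adjsym z v hadj) with h1 | h1
    · exact hzx h1
    · exact hzy h1
  have adjinv : ∀ (S : Set V) (u w : V), push S A u w → Adj A u w := by
    intro S u w hp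
    unfold push at hp; unfold Adj; tauto
  have main : ∀ S : Set V, ∃ w, Adj A z w ∧ Adj A v w ∧
      ((push S A z w ∧ push S A w v) ∨ (push S A v w ∧ push S A w z)) := by
    intro S
    rcases h S z v hzv with hadj | ⟨w, hw⟩
    · exfalso; apply hnadj
      rcases hadj with h1 | h1
      · exact adjinv S z v h1
      · exact adjsym v z (adjinv S v z h1)
    · refine ⟨w, ?_, ?_, hw⟩
      · rcases hw with ⟨h1, _⟩ | ⟨_, h2⟩
        · exact adjinv S z w h1
        · exact adjsym w z (adjinv S w z h2)
      · rcases hw with ⟨_, h2⟩ | ⟨h1, _⟩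
        · exact adjsym w v (adjinv S w v h2)
        · exact adjinv S v w h1
  have gen : ∀ a : V, (∀ w, Adj A v w → Adj A z w → w = a) → z ≠ a → False := by
    intro a hmid hza
    obtain ⟨w0, hzw0, hvw0, hp0⟩ := main ∅
    rw [hmid w0 hvw0 hzw0] at hp0
    obtain ⟨w1, hzw1, hvw1, hp1⟩ := main {z}
    rw [hmid w1 hvw1 hzw1] at hp1
    have hne1 : ¬ (a = z) := fun hh => hza hh.symm
    have hne2 : ¬ (v = z) := fun hh => hzv hh.symm
    simp only [push, Set.mem_empty_iff_false, Set.mem_singleton_iff, Xor', Xor,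
      hne1, hne2] at hp0 hp1
    simp only [false_and, and_false, false_or, and_true, true_and, not_false_iff,
      not_true, or_false, false_iff, iff_false] at hp0 hp1
    rcases hp0 with ⟨p1, p2⟩ | ⟨p1, p2⟩ <;> rcases hp1 with ⟨q1, q2⟩ | ⟨q1, q2⟩
    · exact hasym z a p1 q1
    · exact hasym a v p2 q1
    · exact hasym a v q2 p1
    · exact hasym a z p2 q2
  constructor
  · by_contra hnzx
    refine gen y (fun w hv hz => ?_) hzy
    rcases (hnbr w).1 hv with h1 | h1
    · exact absurd (h1 ▸ hz) hnzx
    · exact h1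
  · by_contra hnzy
    refine gen x (fun w hv hz => ?_) hzx
    rcases (hnbr w).1 hv with h1 | h1
    · exact h1
    · exact absurd (h1 ▸ hz) hnzy
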